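/- Let $m$ be a positive integer. The map $n \mapsto a(n)$, sending an exact divisor $n$ of $m$ to the unique residue $a(n)$ modulo $2m$ satisfying $a(n) \equiv -1 \pmod{2n}$ and $a(n) \equiv 1 \pmod{2m/n}$, is a group isomorphism from $(\mathrm{Ex}_m, *)$ onto $O_m = \{a \bmod 2m : a^2 \equiv 1 \pmod{4m}\}$. -/

import Mathlib

def eA0 (m n : ℕ) : ℤ := -1 + 2 * n * (Nat.gcdA n (m / n))

lemma eA0_add_one (m n : ℕ) : (2 * n : ℤ) ∣ eA0 m n + 1 :=
  ⟨Nat.gcdA n (m / n), by unfold eA0; ring⟩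

lemma eA0_sub_one (m n : ℕ) (hc : Nat.gcd n (m / n) = 1) :
    (2 * (m / n : ℕ) : ℤ) ∣ eA0 m n - 1 := by
  have hb := Nat.gcd_eq_gcd_ab n (m / n)
  rw [hc] at hb
  have hb' : (1:ℤ) = n * Nat.gcdA n (m / n) + (m / n : ℕ) * Nat.gcdB n (m / n) := by
    exact_mod_cast hb
  refine ⟨-Nat.gcdB n (m / n), ?_⟩
  unfold eA0
  linear_combination -2 * hb'

lemma combine2 (a b : ℕ) (h : Nat.Coprime a b) {D : ℤ}
    (h1 : (2 * a : ℤ) ∣ D) (h2 : (2 * b : ℤ) ∣ D) : (2 * (a * b) : ℤ) ∣ D := by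
  obtain ⟨k, hk⟩ := h1
  have hb : (b : ℤ) ∣ a * k := by
    have : (2 * b : ℤ) ∣ 2 * (a * k) := by rw [← mul_assoc, ← hk]; exact h2
    exact (mul_dvd_mul_iff_left (by norm_num : (2:ℤ) ≠ 0)).mp this
  have hcop : IsCoprime (b : ℤ) (a : ℤ) := by
    rw [Int.isCoprime_iff_gcd_eq_one]
    simpa [Nat.Coprime, Nat.gcd_comm] using h
  obtain ⟨j, hj⟩ := hcop.dvd_of_dvd_mul_left hb
  exact ⟨j, by rw [hk, hj]; ring⟩

lemma uniq2 (m n : ℕ) (hn : n ∣ m) (hc : Nat.gcd n (m / n) = 1) {x y : ℤ}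
    (hx1 : (2 * n : ℤ) ∣ x + 1) (hx2 : (2 * (m / n : ℕ) : ℤ) ∣ x - 1)
    (hy1 : (2 * n : ℤ) ∣ y + 1) (hy2 : (2 * (m / n : ℕ) : ℤ) ∣ y - 1) :
    (2 * m : ℤ) ∣ x - y := by
  have h1 : (2 * n : ℤ) ∣ x - y := by
    have := dvd_sub hx1 hy1; simpa using this
  have h2 : (2 * (m / n : ℕ) : ℤ) ∣ x - y := by
    have := dvd_sub hx2 hy2; simpa using this
  have := combine2 n (m / n) hc h1 h2
  rwa [← Nat.cast_mul, Nat.mul_div_cancel' hn] at this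

lemma eA0_sq (m n : ℕ) (hn : n ∣ m) (hc : Nat.gcd n (m / n) = 1) :
    (4 * m : ℤ) ∣ (eA0 m n) ^ 2 - 1 := by
  obtain ⟨A, hA⟩ := eA0_add_one m n
  obtain ⟨B, hB⟩ := eA0_sub_one m n hc
  have hnm : ((m / n : ℕ) : ℤ) * n = m := by
    rw [← Nat.cast_mul, Nat.div_mul_cancel hn]
  refine ⟨B * A, ?_⟩
  have : eA0 m n ^ 2 - 1 = (eA0 m n - 1) * (eA0 m n + 1) := by ring
  rw [this, hA, hB, ← hnm]; ring

lemma mem_helper (m : ℕ) (x₀ : ℤ) (h : (4 * m : ℤ) ∣ x₀ ^ 2 - 1) :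
    ∀ x : ℤ, (x : ZMod (2 * m)) = (x₀ : ZMod (2 * m)) →
      Int.ModEq (4 * (m : ℤ)) (x ^ 2) 1 := by
  intro x hx
  rw [ZMod.intCast_eq_intCast_iff] at hx
  obtain ⟨k, hk⟩ : (2 * (m:ℤ)) ∣ x - x₀ := by
    have := hx.symm.dvd
    push_cast at this
    exact this
  rw [Int.modEq_iff_dvd]
  obtain ⟨j, hj⟩ := h
  refine ⟨-(k * (x₀ + m * k)) - j, ?_⟩
  have hx' : x = x₀ + 2 * m * k := by linarith
  rw [hx']
  linear_combination -hj

lemma cop_div_gcd (m u : ℕ) (hm : m ≠ 0) :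
    Nat.Coprime (m / Nat.gcd m (u ^ m)) u := by
  rcases Nat.eq_zero_or_pos u with hu | hu
  · subst hu
    rw [zero_pow hm, Nat.gcd_zero_right, Nat.div_self (Nat.pos_of_ne_zero hm)]
    exact Nat.coprime_one_left _
  set g := Nat.gcd m (u ^ m) with hgdef
  have hune : u ≠ 0 := hu.ne'
  have hupow : u ^ m ≠ 0 := pow_ne_zero _ hune
  have hg : g ∣ m := Nat.gcd_dvd_left _ _
  have hgpos : 0 < g := Nat.gcd_pos_of_pos_left _ (Nat.pos_of_ne_zero hm)
  have hdivne : m / g ≠ 0 := (Nat.div_pos (Nat.le_of_dvd (Nat.pos_of_ne_zero hm) hg) hgpos).ne'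
  by_contra h
  obtain ⟨p, hp, hpd⟩ := Nat.exists_prime_and_dvd h
  have h1 : p ∣ m / g := hpd.trans (Nat.gcd_dvd_left _ _)
  have h2 : p ∣ u := hpd.trans (Nat.gcd_dvd_right _ _)
  have hvg : g.factorization p = min (m.factorization p) ((u ^ m).factorization p) := by
    rw [hgdef, Nat.factorization_gcd hm hupow]; exact Finsupp.inf_apply _ _ _
  have hmin : g.factorization p = m.factorization p := by
    rw [hvg]
    refine min_eq_left ?_
    have h3 : m.factorization p < m := Nat.factorization_lt p hm
    have h4 : 1 ≤ u.factorization p := hp.factorization_pos_of_dvd hune h2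
    have h5 : (u ^ m).factorization p = m * u.factorization p := by
      simp [Nat.factorization_pow]
    have h6 : m ≤ m * u.factorization p := Nat.le_mul_of_pos_right m h4
    omega
  have hzero : (m / g).factorization p = 0 := by
    rw [Nat.factorization_div hg]
    have := Finsupp.tsub_apply m.factorization g.factorization p
    omega
  have := hp.factorization_pos_of_dvd hdivne h1
  omega

lemma cast_eq_of (m n : ℕ) (hn : n ∣ m) (hc : Nat.gcd n (m / n) = 1) (z : ℤ)
    (h1 : (2 * n : ℤ) ∣ z + 1) (h2 : (2 * (m / n : ℕ) : ℤ) ∣ z - 1) :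
    ((eA0 m n : ℤ) : ZMod (2 * m)) = (z : ZMod (2 * m)) := by
  rw [ZMod.intCast_eq_intCast_iff, Int.modEq_iff_dvd]
  have := uniq2 m n hn hc (eA0_add_one m n) (eA0_sub_one m n hc) h1 h2
  push_cast
  simpa [neg_sub] using dvd_neg.mpr this

lemma dvd_aux (m n n' : ℕ) (hn : n ∣ m) (hn' : n' ∣ m) (x : ℤ)
    (h1 : (2 * n : ℤ) ∣ x + 1) (h2 : (2 * (m / n' : ℕ) : ℤ) ∣ x - 1) : n ∣ n' := by
  set c := Nat.gcd n (m / n') with hc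
  have hc1 : (2 * c : ℤ) ∣ x + 1 :=
    dvd_trans (by exact_mod_cast mul_dvd_mul_left 2 (Int.natCast_dvd_natCast.mpr (Nat.gcd_dvd_left _ _))) h1
  have hc2 : (2 * c : ℤ) ∣ x - 1 :=
    dvd_trans (by exact_mod_cast mul_dvd_mul_left 2 (Int.natCast_dvd_natCast.mpr (Nat.gcd_dvd_right _ _))) h2
  have h2' : (2 * c : ℤ) ∣ 2 := by
    have := dvd_sub hc1 hc2; simpa using this
  have hcd : (c : ℤ) ∣ 1 :=
    (mul_dvd_mul_iff_left (by norm_num : (2:ℤ) ≠ 0)).mp (by simpa using h2')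
  have hone : c = 1 := Nat.dvd_one.mp (by exact_mod_cast hcd)
  have hcop : Nat.Coprime n (m / n') := hone
  have hdvd : n ∣ n' * (m / n') := by
    rw [Nat.mul_div_cancel' hn']; exact hn
  exact hcop.dvd_of_dvd_mul_right hdvd
lemma dvd_cast2 {a b : ℕ} (h : a ∣ b) {D : ℤ} (hD : (2 * (b:ℤ)) ∣ D) : (2 * (a:ℤ)) ∣ D :=
  dvd_trans (mul_dvd_mul_left 2 (Int.natCast_dvd_natCast.mpr h)) hD

/-- The map `n ↦ a(n)` is a group isomorphism from the group of exact divisors of `m`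
(under `n * n' = n n' / gcd(n,n')²`) onto `O_m = {a mod 2m : a² ≡ 1 mod 4m}`. -/
theorem exact_divisors_iso_Om (m : ℕ) (hm : 0 < m) :
    ∃ f : {n : ℕ // 0 < n ∧ n ∣ m ∧ Nat.gcd n (m / n) = 1} →
          {a : ZMod (2 * m) // ∀ x : ℤ, (x : ZMod (2 * m)) = a →
            Int.ModEq (4 * (m : ℤ)) (x ^ 2) 1},
      Function.Bijective f ∧
      (∀ n : {n : ℕ // 0 < n ∧ n ∣ m ∧ Nat.gcd n (m / n) = 1},
        ZMod.castHom (mul_dvd_mul_left 2 n.2.2.1) (ZMod (2 * n.1)) (f n).1 = -1 ∧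
        ZMod.castHom (mul_dvd_mul_left 2 (Nat.div_dvd_of_dvd n.2.2.1))
          (ZMod (2 * (m / n.1))) (f n).1 = 1) ∧
      (∀ n n' s : {n : ℕ // 0 < n ∧ n ∣ m ∧ Nat.gcd n (m / n) = 1},
        s.1 = n.1 * n'.1 / Nat.gcd n.1 n'.1 ^ 2 → (f s).1 = (f n).1 * (f n').1) := by
  haveI : NeZero (2 * m) := ⟨by omega⟩
  refine ⟨fun n => ⟨((eA0 m n.1 : ℤ) : ZMod (2 * m)),
    mem_helper m (eA0 m n.1) (eA0_sq m n.1 n.2.2.1 n.2.2.2)⟩, ⟨?_, ?_⟩, ?_, ?_⟩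
  · -- injective
    intro n n' hEq
    have hv : ((eA0 m n.1 : ℤ) : ZMod (2 * m)) = ((eA0 m n'.1 : ℤ) : ZMod (2 * m)) :=
      congrArg Subtype.val hEq
    rw [ZMod.intCast_eq_intCast_iff] at hv
    have hdvd : (2 * (m:ℤ)) ∣ eA0 m n'.1 - eA0 m n.1 := by
      have := hv.dvd; push_cast at this; exact this
    have hdvd' : (2 * (m:ℤ)) ∣ eA0 m n.1 - eA0 m n'.1 := by
      simpa [neg_sub] using dvd_neg.mpr hdvd
    have t1 : (2 * (n'.1:ℤ)) ∣ eA0 m n.1 + 1 := by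
      have h := dvd_sub (eA0_add_one m n'.1) (dvd_cast2 n'.2.2.1 hdvd)
      rwa [show eA0 m n'.1 + 1 - (eA0 m n'.1 - eA0 m n.1) = eA0 m n.1 + 1 from by ring] at h
    have t2 : (2 * ((m / n'.1 : ℕ):ℤ)) ∣ eA0 m n.1 - 1 := by
      have h := dvd_sub (eA0_sub_one m n'.1 n'.2.2.2)
        (dvd_cast2 (Nat.div_dvd_of_dvd n'.2.2.1) hdvd)
      rwa [show eA0 m n'.1 - 1 - (eA0 m n'.1 - eA0 m n.1) = eA0 m n.1 - 1 from by ring] at h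
    have t1' : (2 * (n.1:ℤ)) ∣ eA0 m n'.1 + 1 := by
      have h := dvd_sub (eA0_add_one m n.1) (dvd_cast2 n.2.2.1 hdvd')
      rwa [show eA0 m n.1 + 1 - (eA0 m n.1 - eA0 m n'.1) = eA0 m n'.1 + 1 from by ring] at h
    have t2' : (2 * ((m / n.1 : ℕ):ℤ)) ∣ eA0 m n'.1 - 1 := by
      have h := dvd_sub (eA0_sub_one m n.1 n.2.2.2)
        (dvd_cast2 (Nat.div_dvd_of_dvd n.2.2.1) hdvd')
      rwa [show eA0 m n.1 - 1 - (eA0 m n.1 - eA0 m n'.1) = eA0 m n'.1 - 1 from by ring] at h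
    exact Subtype.ext (Nat.dvd_antisymm
      (dvd_aux m n.1 n'.1 n.2.2.1 n'.2.2.1 (eA0 m n.1) (eA0_add_one m n.1) t2)
      (dvd_aux m n'.1 n.1 n'.2.2.1 n.2.2.1 (eA0 m n'.1) (eA0_add_one m n'.1) t2'))
  · -- surjective
    intro a
    set X := (a.1).val with hXdef
    have hXcast : ((X : ℤ) : ZMod (2 * m)) = a.1 := by
      push_cast
      simp [hXdef, ZMod.natCast_val, ZMod.cast_id]
    have hsq : (4 * (m:ℤ)) ∣ (X:ℤ) ^ 2 - 1 := by
      have h := (a.2 (X : ℤ) hXcast).dvd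
      simpa [neg_sub] using dvd_neg.mpr h
    have hodd : ¬ (2 ∣ X) := by
      intro ⟨t, ht⟩
      have h4 : (4:ℤ) ∣ (X:ℤ)^2 - 1 := dvd_trans ⟨(m:ℤ), rfl⟩ hsq
      obtain ⟨k, hk⟩ := h4
      have : (X:ℤ) = 2 * t := by exact_mod_cast ht
      rw [this] at hk
      have : 4 * ((t:ℤ)*t) - 1 = 4 * k := by linear_combination hk
      omega
    obtain ⟨u, hu⟩ : ∃ u, X = 2 * u + 1 := ⟨X / 2, by omega⟩
    have hmuv : m ∣ u * (u + 1) := by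
      have h4 : (4 * (m:ℤ)) ∣ 4 * ((u:ℤ) * (u + 1)) := by
        have : (X:ℤ)^2 - 1 = 4 * ((u:ℤ) * (u+1)) := by
          have : (X:ℤ) = 2 * u + 1 := by exact_mod_cast hu
          rw [this]; ring
        rwa [this] at hsq
      have := (mul_dvd_mul_iff_left (by norm_num : (4:ℤ) ≠ 0)).mp h4
      exact_mod_cast this
    set g := Nat.gcd m (u ^ m) with hgdef
    have hg : g ∣ m := Nat.gcd_dvd_left _ _
    set n := m / g with hndef
    have hcop1 : Nat.Coprime n u := cop_div_gcd m u hm.ne'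
    have hgu : g ∣ u := by
      have c0 : Nat.Coprime u (u + 1) := by
        simpa [Nat.add_comm] using Nat.coprime_add_self_right.mpr (Nat.coprime_one_right u)
      have c1 : Nat.Coprime g (u + 1) :=
        Nat.Coprime.coprime_dvd_left (Nat.gcd_dvd_right _ _) (c0.pow_left m)
      exact c1.dvd_of_dvd_mul_right (hg.trans hmuv)
    have hgpos : 0 < g := Nat.gcd_pos_of_pos_left _ hm
    have hmn : m / n = g := Nat.div_div_self hg hm.ne'
    have hn_dvd : n ∣ m := Nat.div_dvd_of_dvd hg
    have hnpos : 0 < n := Nat.div_pos (Nat.le_of_dvd hm hg) hgpos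
    have hcopn : Nat.gcd n (m / n) = 1 := by
      rw [hmn]; exact Nat.Coprime.coprime_dvd_right hgu hcop1
    have hnv : n ∣ u + 1 := hcop1.dvd_of_dvd_mul_left (hn_dvd.trans hmuv)
    refine ⟨⟨n, hnpos, hn_dvd, hcopn⟩, Subtype.ext ?_⟩
    show ((eA0 m n : ℤ) : ZMod (2 * m)) = a.1
    rw [← hXcast]
    apply cast_eq_of m n hn_dvd hcopn
    · obtain ⟨k, hk⟩ := hnv
      refine ⟨k, ?_⟩
      have : ((X:ℤ)) = 2 * u + 1 := by exact_mod_cast hu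
      rw [this]
      have : ((u:ℤ)) + 1 = n * k := by exact_mod_cast hk
      linear_combination 2 * this
    · rw [hmn]
      obtain ⟨k, hk⟩ := hgu
      refine ⟨k, ?_⟩
      have h1 : ((X:ℤ)) = 2 * u + 1 := by exact_mod_cast hu
      have h2 : ((u:ℤ)) = g * k := by exact_mod_cast hk
      rw [h1]
      linear_combination 2 * h2
  · -- cast conditions
    intro n
    constructor
    · rw [map_intCast]
      have he : ((-1 : ℤ) : ZMod (2 * n.1)) = -1 := by push_cast; ring
      rw [← he, ZMod.intCast_eq_intCast_iff, Int.modEq_iff_dvd]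
      have := dvd_neg.mpr (eA0_add_one m n.1)
      rw [show -(eA0 m n.1 + 1) = -1 - eA0 m n.1 from by ring] at this
      push_cast
      exact this
    · rw [map_intCast]
      have he : ((1 : ℤ) : ZMod (2 * (m / n.1))) = 1 := by push_cast; ring
      rw [← he, ZMod.intCast_eq_intCast_iff, Int.modEq_iff_dvd]
      have := dvd_neg.mpr (eA0_sub_one m n.1 n.2.2.2)
      rw [show -(eA0 m n.1 - 1) = 1 - eA0 m n.1 from by ring] at this
      push_cast
      exact this
  · -- multiplicativity
    intro N N' s hs
    obtain ⟨n, hn1, hn2, hn3⟩ := N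
    obtain ⟨n', hn'1, hn'2, hn'3⟩ := N'
    simp only at hs ⊢
    set g := Nat.gcd n n' with hgdef
    have hgpos : 0 < g := Nat.gcd_pos_of_pos_left _ hn1
    have hgn : g ∣ n := Nat.gcd_dvd_left _ _
    have hgn' : g ∣ n' := Nat.gcd_dvd_right _ _
    set n₁ := n / g with hn₁def
    set n₂ := n' / g with hn₂def
    have hn₁e : g * n₁ = n := Nat.mul_div_cancel' hgn
    have hn₂e : g * n₂ = n' := Nat.mul_div_cancel' hgn'
    have hn₁pos : 0 < n₁ := Nat.div_pos (Nat.le_of_dvd hn1 hgn) hgpos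
    have hn₂pos : 0 < n₂ := Nat.div_pos (Nat.le_of_dvd hn'1 hgn') hgpos
    have hs' : s.1 = n₁ * n₂ := by
      rw [hs, sq, ← Nat.div_mul_div_comm hgn hgn']
    have hcross : n * n₂ = n' * n₁ := by
      rw [← hn₁e, ← hn₂e]; ring
    have hL : n * n₂ ∣ m := by
      have h := Nat.lcm_dvd hn2 hn'2
      rwa [Nat.lcm, ← hgdef, Nat.mul_div_assoc n hgn'] at h
    have hL' : n' * n₁ ∣ m := hcross ▸ hL
    have hn₂m : n₂ ∣ m / n := (Nat.dvd_div_iff_mul_dvd hn2).mpr hL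
    have hn₁m : n₁ ∣ m / n' := (Nat.dvd_div_iff_mul_dvd hn'2).mpr hL'
    set r := m / (n * n₂) with hrdef
    have hrm : n * n₂ * r = m := Nat.mul_div_cancel' hL
    have hmn_eq : m / n = n₂ * r := by
      apply Nat.div_eq_of_eq_mul_left hn1
      rw [← hrm]; ring
    have hmn'_eq : m / n' = n₁ * r := by
      apply Nat.div_eq_of_eq_mul_left hn'1
      rw [← hrm, hcross]; ring
    have hr_n : r ∣ m / n := hmn_eq ▸ dvd_mul_left r n₂
    have hr_n' : r ∣ m / n' := hmn'_eq ▸ dvd_mul_left r n₁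
    have hms : m / s.1 = g * r := by
      rw [hs']
      apply Nat.div_eq_of_eq_mul_left (Nat.mul_pos hn₁pos hn₂pos)
      rw [← hrm, ← hn₁e]; ring
    have hcop12 : Nat.Coprime n₁ n₂ := Nat.coprime_div_gcd_div_gcd hgpos
    have hcopgr : Nat.Coprime g r :=
      Nat.Coprime.coprime_dvd_left hgn (Nat.Coprime.coprime_dvd_right hr_n hn3)
    set x := eA0 m n with hxdef
    set y := eA0 m n' with hydef
    have hx1 : (2 * (n:ℤ)) ∣ x + 1 := eA0_add_one m n
    have hx2 : (2 * ((m / n : ℕ):ℤ)) ∣ x - 1 := eA0_sub_one m n hn3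
    have hy1 : (2 * (n':ℤ)) ∣ y + 1 := eA0_add_one m n'
    have hy2 : (2 * ((m / n' : ℕ):ℤ)) ∣ y - 1 := eA0_sub_one m n' hn'3
    have hx1a : (2 * (n₁:ℤ)) ∣ x + 1 := dvd_cast2 (Nat.div_dvd_of_dvd hgn) hx1
    have hx1b : (2 * (g:ℤ)) ∣ x + 1 := dvd_cast2 hgn hx1
    have hx2a : (2 * (n₂:ℤ)) ∣ x - 1 := dvd_cast2 hn₂m hx2
    have hx2b : (2 * (r:ℤ)) ∣ x - 1 := dvd_cast2 hr_n hx2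
    have hy1a : (2 * (n₂:ℤ)) ∣ y + 1 := dvd_cast2 (Nat.div_dvd_of_dvd hgn') hy1
    have hy1b : (2 * (g:ℤ)) ∣ y + 1 := dvd_cast2 hgn' hy1
    have hy2a : (2 * (n₁:ℤ)) ∣ y - 1 := dvd_cast2 hn₁m hy2
    have hy2b : (2 * (r:ℤ)) ∣ y - 1 := dvd_cast2 hr_n' hy2
    have hp1 : (2 * (n₁:ℤ)) ∣ x * y + 1 := by
      have h := dvd_sub (hx1a.mul_right y) hy2a
      rwa [show (x + 1) * y - (y - 1) = x * y + 1 from by ring] at h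
    have hp2 : (2 * (n₂:ℤ)) ∣ x * y + 1 := by
      have h := dvd_sub (hy1a.mul_right x) hx2a
      rwa [show (y + 1) * x - (x - 1) = x * y + 1 from by ring] at h
    have hP : (2 * ((n₁:ℤ) * n₂)) ∣ x * y + 1 := combine2 n₁ n₂ hcop12 hp1 hp2
    have hq1 : (2 * (g:ℤ)) ∣ x * y - 1 := by
      have h := dvd_sub (hx1b.mul_right y) hy1b
      rwa [show (x + 1) * y - (y + 1) = x * y - 1 from by ring] at h
    have hq2 : (2 * (r:ℤ)) ∣ x * y - 1 := by
      have h := dvd_add (hx2b.mul_right y) hy2b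
      rwa [show (x - 1) * y + (y - 1) = x * y - 1 from by ring] at h
    have hQ : (2 * ((g:ℤ) * r)) ∣ x * y - 1 := combine2 g r hcopgr hq1 hq2
    have hfin : ((eA0 m s.1 : ℤ) : ZMod (2 * m)) = ((x * y : ℤ) : ZMod (2 * m)) := by
      apply cast_eq_of m s.1 s.2.2.1 s.2.2.2
      · rw [hs']; push_cast; exact hP
      · rw [hms]; push_cast; exact hQ
    rw [hfin, Int.cast_mul]
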